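/- For every d ≥ 1, the number of permutations of {1,...,d+2} containing an increasing subsequence of length d equals (1/2)d^4 + d^3 + (1/2)d^2 + d + 3, i.e. 2·B_d(d+2) = d^4 + 2d^3 + d^2 + 2d + 6. -/

import Mathlib

/-- `σ` has an increasing subsequence of length `k`. -/
def ContainsInc (n k : ℕ) (σ : Equiv.Perm (Fin n)) : Prop :=
  ∃ s : Fin k → Fin n, StrictMono s ∧ StrictMono (fun i => σ (s i))

/-- `B d n`: number of permutations of length `n` containing an increasing
subsequence of length `d`. -/
noncomputable def B (d n : ℕ) : ℕ := Nat.card {σ : Equiv.Perm (Fin n) // ContainsInc n d σ}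

/-- `G d n`: number of permutations of length `n` avoiding an increasing
subsequence of length `d`. -/
noncomputable def G (d n : ℕ) : ℕ := Nat.card {σ : Equiv.Perm (Fin n) // ¬ ContainsInc n d σ}


namespace BdProof

open Equiv



variable {n m c : ℕ}

/-- insert the max value at position `k`. -/
def ins (k : Fin (n+1)) (τ : Equiv.Perm (Fin n)) : Equiv.Perm (Fin (n+1)) :=
  (finSuccEquiv' k).trans ((Equiv.optionCongr τ).trans (finSuccEquiv' (Fin.last n)).symm)

@[simp] lemma ins_at (k : Fin (n+1)) (τ : Equiv.Perm (Fin n)) : ins k τ k = Fin.last n := by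
  simp [ins, finSuccEquiv'_at]

@[simp] lemma ins_succAbove (k : Fin (n+1)) (τ : Equiv.Perm (Fin n)) (j : Fin n) :
    ins k τ (k.succAbove j) = Fin.castSucc (τ j) := by
  simp [ins, finSuccEquiv'_succAbove, Fin.succAbove_last]

lemma succAbove_val (k : Fin (n+1)) (j : Fin n) :
    ((k.succAbove j : Fin (n+1)) : ℕ) = if (j:ℕ) < (k:ℕ) then (j:ℕ) else (j:ℕ)+1 := by
  rcases lt_or_ge (Fin.castSucc j) k with h | h
  · rw [Fin.succAbove_of_castSucc_lt _ _ h, Fin.coe_castSucc,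
      if_pos (by simpa [Fin.lt_def] using h)]
  · rw [Fin.succAbove_of_le_castSucc _ _ h, Fin.val_succ,
      if_neg (by simp only [Fin.le_def, Fin.coe_castSucc] at h; omega)]

lemma ins_injective : Function.Injective
    (fun x : Fin (n+1) × Equiv.Perm (Fin n) => ins x.1 x.2) := by
  rintro ⟨k, τ⟩ ⟨k', τ'⟩ h
  simp only at h
  have hk : k = k' := by
    have h1 : ins k τ k = Fin.last n := ins_at k τ
    have h2 : ins k' τ' k' = Fin.last n := ins_at k' τ'
    rw [h] at h1
    exact (ins k' τ').injective (h1.trans h2.symm)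
  subst hk
  have hτ : τ = τ' := by
    ext j
    have := congrArg (fun σ : Equiv.Perm (Fin (n+1)) => σ (k.succAbove j)) h
    have h2 : τ j = τ' j := by simpa [Fin.castSucc_inj] using this
    exact congrArg Fin.val h2
  rw [hτ]

lemma ins_bijective : Function.Bijective
    (fun x : Fin (n+1) × Equiv.Perm (Fin n) => ins x.1 x.2) := by
  rw [Fintype.bijective_iff_injective_and_card]
  refine ⟨ins_injective, ?_⟩
  simp [Fintype.card_perm, Nat.factorial_succ]

/-- decomposition equivalence -/
noncomputable def E : (Fin (n+1) × Equiv.Perm (Fin n)) ≃ Equiv.Perm (Fin (n+1)) :=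
  Equiv.ofBijective _ ins_bijective

@[simp] lemma E_apply (x : Fin (n+1) × Equiv.Perm (Fin n)) : E x = ins x.1 x.2 := rfl


variable {n m c : ℕ}

lemma sm_ge {m n : ℕ} {s : Fin m → Fin n} (hs : StrictMono s) :
    ∀ i : Fin m, (i : ℕ) ≤ (s i : ℕ) := by
  have key : ∀ t : ℕ, ∀ i : Fin m, (i : ℕ) = t → (i : ℕ) ≤ (s i : ℕ) := by
    intro t
    induction t with
    | zero => intro i h; omega
    | succ t ih =>
      intro i h
      have hlt : t < m := by omega
      have h1 : (⟨t, hlt⟩ : Fin m) < i := by simp [Fin.lt_def]; omega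
      have h2 := hs h1
      have h3 := ih ⟨t, hlt⟩ rfl
      simp only [Fin.lt_def] at h2
      simp only at h3
      omega
  exact fun i => key _ i rfl

lemma sm_le {m n : ℕ} {s : Fin m → Fin n} (hs : StrictMono s) (i : Fin m) :
    (s i : ℕ) + m ≤ n + (i : ℕ) := by
  have hs' : StrictMono (fun j : Fin m => (s j.rev).rev) := by
    intro a b h
    have : b.rev < a.rev := by
      simp only [Fin.lt_def, Fin.val_rev]
      have := a.2; have := b.2
      simp only [Fin.lt_def] at h
      omega
    have := hs this
    simp only [Fin.lt_def, Fin.val_rev] at *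
    have := (s b.rev).2; have := (s a.rev).2
    omega
  have h1 := sm_ge hs' i.rev
  simp only [Fin.rev_rev, Fin.val_rev] at h1
  have := i.2; have := (s i).2
  omega

/-- `τ` has an increasing subsequence of length `m` within its first `c` positions. -/
def PIB (n m c : ℕ) (τ : Equiv.Perm (Fin n)) : Prop :=
  ∃ s : Fin m → Fin n, StrictMono s ∧ StrictMono (fun i => τ (s i)) ∧ ∀ i, (s i : ℕ) < c

lemma pib_zero (τ : Equiv.Perm (Fin n)) : PIB n 0 c τ :=
  ⟨fun i => i.elim0, fun i => i.elim0, fun i => i.elim0, fun i => i.elim0⟩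

lemma pib_false (h : c < m) (τ : Equiv.Perm (Fin n)) : ¬ PIB n m c τ := by
  rintro ⟨s, hs, -, hc⟩
  have h0 : m - 1 < m := by omega
  have := sm_ge hs ⟨m - 1, h0⟩
  have := hc ⟨m - 1, h0⟩
  simp only at *
  omega

lemma pib_mono_c (h : c ≤ c') (τ : Equiv.Perm (Fin n)) : PIB n m c τ → PIB n m c' τ := by
  rintro ⟨s, hs, hv, hc⟩
  exact ⟨s, hs, hv, fun i => lt_of_lt_of_le (hc i) h⟩

lemma castSucc_comp_sm {α : Type*} [Preorder α] {s : Fin (m+1) → α} (hs : StrictMono s) :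
    StrictMono (fun j : Fin m => s j.castSucc) := by
  intro a b h
  exact hs (Fin.castSucc_lt_castSucc_iff.mpr h)

lemma pib_drop {τ : Equiv.Perm (Fin n)} : PIB n (m+1) c τ → PIB n m c τ := by
  rintro ⟨s, hs, hv, hc⟩
  exact ⟨fun j => s j.castSucc, castSucc_comp_sm hs, castSucc_comp_sm hv,
    fun i => hc _⟩

lemma pib_dropLast {τ : Equiv.Perm (Fin n)} : PIB n (m+1) c τ → PIB n m (c-1) τ := by
  rintro ⟨s, hs, hv, hc⟩
  refine ⟨fun j => s j.castSucc, castSucc_comp_sm hs, castSucc_comp_sm hv, fun i => ?_⟩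
  have h1 : s i.castSucc < s (Fin.last m) := hs (Fin.castSucc_lt_last i)
  have h2 := hc (Fin.last m)
  simp only [Fin.lt_def] at h1
  show (s i.castSucc : ℕ) < c - 1
  omega

lemma pib_id (h1 : m ≤ c) (h2 : m ≤ n) : PIB n m c 1 := by
  refine ⟨fun j => ⟨j, lt_of_lt_of_le j.2 h2⟩, ?_, ?_, ?_⟩
  · intro a b h; simpa [Fin.mk_lt_mk] using h
  · intro a b h
    simp only [Equiv.Perm.coe_one, id_eq]
    simpa [Fin.mk_lt_mk] using h
  · intro i; exact lt_of_lt_of_le i.2 h1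

lemma sm_fin_self {f : Fin n → Fin n} (hf : StrictMono f) (i : Fin n) : f i = i := by
  have := sm_ge hf i
  have := sm_le hf i
  exact Fin.ext (by omega)

lemma pib_n_n (τ : Equiv.Perm (Fin n)) : PIB n n n τ ↔ τ = 1 := by
  constructor
  · rintro ⟨s, hs, hv, -⟩
    have hss : ∀ i, s i = i := sm_fin_self hs
    have : StrictMono (fun i => τ i) := by
      intro a b h
      have := hv h
      simpa [hss] using this
    ext i
    exact congrArg Fin.val (sm_fin_self this i)
  · rintro rfl
    exact pib_id le_rfl le_rfl


lemma succAbove_lt_iff_val (k : Fin (n+1)) (j : Fin n) :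
    k.succAbove j < k ↔ (j : ℕ) < (k : ℕ) := by
  have h := succAbove_val k j
  simp only [Fin.lt_def]
  split_ifs at h <;> omega

lemma master (k : Fin (n+1)) (τ : Equiv.Perm (Fin n)) (m c : ℕ) :
    PIB (n+1) (m+1) c (ins k τ) ↔
      ((k : ℕ) < c ∧ PIB n m (k : ℕ) τ) ∨
        PIB n (m+1) (if (k : ℕ) < c then c - 1 else c) τ := by
  constructor
  · rintro ⟨s, hs, hv, hc⟩
    by_cases hk : ∃ i, s i = k
    · obtain ⟨i0, hi0⟩ := hk
      have hi0top : i0 = Fin.last m := by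
        by_contra hne
        have hlt : i0 < Fin.last m := lt_of_le_of_ne (Fin.le_last i0) hne
        have h2 := hv hlt
        simp only [hi0, ins_at] at h2
        exact absurd h2 (not_lt.mpr (Fin.le_last _))
      have hlast : s (Fin.last m) = k := by rw [← hi0top]; exact hi0
      left
      refine ⟨by have := hc i0; rw [hi0] at this; exact this, ?_⟩
      have hne : ∀ j : Fin m, s j.castSucc ≠ k := by
        intro j h
        have hj : j.castSucc = i0 := hs.injective (h.trans hi0.symm)
        rw [hi0top] at hj
        exact absurd hj (Fin.ne_last_of_lt (Fin.castSucc_lt_last j))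
      choose s' hs' using fun j => Fin.exists_succAbove_eq (hne j)
      refine ⟨s', ?_, ?_, ?_⟩
      · intro a b h
        have h2 : s a.castSucc < s b.castSucc := hs (Fin.castSucc_lt_castSucc_iff.mpr h)
        rw [← hs' a, ← hs' b] at h2
        exact Fin.succAbove_lt_succAbove_iff.mp h2
      · intro a b h
        have h2 : ins k τ (s a.castSucc) < ins k τ (s b.castSucc) :=
          hv (Fin.castSucc_lt_castSucc_iff.mpr h)
        rw [← hs' a, ← hs' b] at h2
        simp only [ins_succAbove] at h2
        exact Fin.castSucc_lt_castSucc_iff.mp h2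
      · intro j
        have h1 : s j.castSucc < s (Fin.last m) := hs (Fin.castSucc_lt_last j)
        rw [← hs' j, hlast] at h1
        exact (succAbove_lt_iff_val k (s' j)).mp h1
    · push_neg at hk
      choose s' hs' using fun i => Fin.exists_succAbove_eq (hk i)
      right
      refine ⟨s', ?_, ?_, ?_⟩
      · intro a b h
        have h2 : s a < s b := hs h
        rw [← hs' a, ← hs' b] at h2
        exact Fin.succAbove_lt_succAbove_iff.mp h2
      · intro a b h
        have h2 : ins k τ (s a) < ins k τ (s b) := hv h
        rw [← hs' a, ← hs' b] at h2
        simp only [ins_succAbove] at h2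
        exact Fin.castSucc_lt_castSucc_iff.mp h2
      · intro i
        have h1 := hc i
        rw [← hs' i] at h1
        have h2 := succAbove_val k (s' i)
        split_ifs with hkc
        · split_ifs at h2 <;> omega
        · split_ifs at h2 <;> omega
  · rintro (⟨hkc, s', h1, h2, h3⟩ | ⟨s', h1, h2, h3⟩)
    · refine ⟨fun i => if h : (i : ℕ) < m then k.succAbove (s' ⟨i, h⟩) else k, ?_, ?_, ?_⟩
      · intro a b hab
        have hab' : (a : ℕ) < (b : ℕ) := hab
        by_cases ha : (a : ℕ) < m <;> by_cases hb : (b : ℕ) < m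
        · simp only [dif_pos ha, dif_pos hb]
          exact Fin.succAbove_lt_succAbove_iff.mpr (h1 (show (⟨a,ha⟩ : Fin m) < ⟨b,hb⟩ from hab'))
        · simp only [dif_pos ha, dif_neg hb]
          exact (succAbove_lt_iff_val k _).mpr (h3 ⟨a, ha⟩)
        · exact absurd (a.2) (by omega)
        · exact absurd (b.2) (by omega)
      · intro a b hab
        have hab' : (a : ℕ) < (b : ℕ) := hab
        by_cases ha : (a : ℕ) < m <;> by_cases hb : (b : ℕ) < m
        · simp only [dif_pos ha, dif_pos hb, ins_succAbove]
          exact Fin.castSucc_lt_castSucc_iff.mpr (h2 (show (⟨a,ha⟩ : Fin m) < ⟨b,hb⟩ from hab'))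
        · simp only [dif_pos ha, dif_neg hb, ins_succAbove, ins_at]
          exact Fin.castSucc_lt_last _
        · exact absurd (a.2) (by omega)
        · exact absurd (b.2) (by omega)
      · intro i
        by_cases hi : (i : ℕ) < m
        · simp only [dif_pos hi]
          have ha := succAbove_val k (s' ⟨i, hi⟩)
          have hb := h3 ⟨i, hi⟩
          split_ifs at ha <;> omega
        · simp only [dif_neg hi]; exact hkc
    · refine ⟨fun i => k.succAbove (s' i), ?_, ?_, ?_⟩
      · intro a b hab
        exact Fin.succAbove_lt_succAbove_iff.mpr (h1 hab)
      · intro a b hab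
        simp only [ins_succAbove]
        exact Fin.castSucc_lt_castSucc_iff.mpr (h2 hab)
      · intro i
        have ha := succAbove_val k (s' i)
        have hb := h3 i
        show ((k.succAbove (s' i) : Fin (n+1)) : ℕ) < c
        split_ifs at hb with hkc
        · split_ifs at ha <;> omega
        · split_ifs at ha <;> omega

open Finset

variable {n : ℕ}

lemma card_iff_congr {α : Type*} {P Q : α → Prop} (h : ∀ x, P x ↔ Q x) :
    Nat.card {x // P x} = Nat.card {x // Q x} :=
  Nat.card_congr (Equiv.subtypeEquivRight h)

lemma card_false {α : Type*} {P : α → Prop} (h : ∀ x, ¬ P x) : Nat.card {x // P x} = 0 := by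
  have : IsEmpty {x // P x} := ⟨fun x => h x x.2⟩
  exact Nat.card_of_isEmpty

lemma card_perm_true {P : Equiv.Perm (Fin n) → Prop} (h : ∀ x, P x) :
    Nat.card {x // P x} = n.factorial := by
  rw [Nat.card_congr (Equiv.subtypeUnivEquiv h)]
  simp [Nat.card_eq_fintype_card, Fintype.card_perm]

lemma card_perm_eq_one : Nat.card {τ : Equiv.Perm (Fin n) // τ = 1} = 1 := by
  classical
  rw [Nat.card_eq_fintype_card]
  exact Fintype.card_subtype_eq 1

lemma card_or_and {α : Type*} [Fintype α] (P Q : α → Prop) :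
    Nat.card {x // P x ∨ Q x} + Nat.card {x // P x ∧ Q x}
      = Nat.card {x // P x} + Nat.card {x // Q x} := by
  classical
  simp only [Nat.card_eq_fintype_card, Fintype.card_subtype]
  rw [filter_or, filter_and]
  exact card_union_add_card_inter _ _

lemma card_split (P : Equiv.Perm (Fin (n+1)) → Prop) :
    Nat.card {σ : Equiv.Perm (Fin (n+1)) // P σ}
      = ∑ k : Fin (n+1), Nat.card {τ : Equiv.Perm (Fin n) // P (ins k τ)} := by
  classical
  have e1 : {x : Fin (n+1) × Equiv.Perm (Fin n) // P (ins x.1 x.2)} ≃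
      {σ : Equiv.Perm (Fin (n+1)) // P σ} :=
    Equiv.subtypeEquiv E (fun x => by rw [E_apply])
  rw [← Nat.card_congr e1,
    Nat.card_congr (Equiv.subtypeProdEquivSigmaSubtype (fun k τ => P (ins k τ)))]
  simp [Nat.card_eq_fintype_card]


noncomputable def cnt (n m c : ℕ) : ℕ := Nat.card {τ : Equiv.Perm (Fin n) // PIB n m c τ}

lemma cnt_zero (n c : ℕ) : cnt n 0 c = n.factorial := card_perm_true (fun τ => pib_zero τ)

lemma cntA : ∀ n, cnt (n+1) n n = n + 1 := by
  intro n
  induction n with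
  | zero => simpa using cnt_zero 1 0
  | succ n IH =>
    rw [cnt, card_split]
    have step : ∀ k : Fin (n+2),
        Nat.card {τ : Equiv.Perm (Fin (n+1)) // PIB (n+2) (n+1) (n+1) (ins k τ)}
          = if (k:ℕ) = n then n + 1 else if (k:ℕ) = n+1 then 1 else 0 := by
      intro k
      have hk2 := k.2
      rw [card_iff_congr (fun τ => master k τ n (n+1))]
      rcases lt_trichotomy ((k:ℕ)) n with hk | hk | hk
      · rw [card_false (fun τ => ?_), if_neg (by omega), if_neg (by omega)]
        rintro (⟨-, hp⟩ | hp)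
        · exact pib_false (by omega) τ hp
        · rw [if_pos (by omega)] at hp
          exact pib_false (by omega) τ hp
      · rw [card_iff_congr (fun τ => ?_),
          show Nat.card {τ : Equiv.Perm (Fin (n+1)) // PIB (n+1) n n τ} = n + 1 from IH,
          if_pos hk]
        constructor
        · rintro (⟨-, hp⟩ | hp)
          · rw [hk] at hp; exact hp
          · rw [if_pos (by omega)] at hp
            exact absurd hp (pib_false (by omega) _)
        · intro hp
          exact Or.inl ⟨by omega, by rw [hk]; exact hp⟩
      · have hk3 : (k:ℕ) = n+1 := by omega
        rw [card_iff_congr (fun τ => ?_), card_perm_eq_one, if_neg (by omega), if_pos hk3]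
        constructor
        · rintro (⟨h, -⟩ | hp)
          · omega
          · rw [if_neg (by omega)] at hp
            exact (pib_n_n τ).mp hp
        · intro hp
          refine Or.inr ?_
          rw [if_neg (by omega)]
          exact (pib_n_n τ).mpr hp
    rw [Finset.sum_congr rfl (fun k _ => step k),
      Fin.sum_univ_eq_sum_range (fun a => if a = n then n+1 else if a = n+1 then 1 else 0) (n+2),
      Finset.sum_range_succ, Finset.sum_range_succ,
      Finset.sum_eq_zero (fun i hi => by
        rw [Finset.mem_range] at hi
        rw [if_neg (by omega), if_neg (by omega)])]
    rw [if_pos rfl, if_neg (show ¬(n+1 = n) by omega), if_pos rfl]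
    omega

lemma cntW : ∀ n, cnt (n+2) n n = (n+1) * (n+2) := by
  intro n
  induction n with
  | zero => simpa using cnt_zero 2 0
  | succ n IH =>
    rw [cnt, card_split]
    have step : ∀ k : Fin (n+3),
        Nat.card {τ : Equiv.Perm (Fin (n+2)) // PIB (n+3) (n+1) (n+1) (ins k τ)}
          = if (k:ℕ) = n then (n+1)*(n+2) else if (k:ℕ) = n+1 then n+2
            else if (k:ℕ) = n+2 then n+2 else 0 := by
      intro k
      have hk2 := k.2
      rw [card_iff_congr (fun τ => master k τ n (n+1))]
      rcases lt_trichotomy ((k:ℕ)) n with hk | hk | hk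
      · rw [card_false (fun τ => ?_), if_neg (by omega), if_neg (by omega), if_neg (by omega)]
        rintro (⟨-, hp⟩ | hp)
        · exact pib_false (by omega) τ hp
        · rw [if_pos (by omega)] at hp
          exact pib_false (by omega) τ hp
      · rw [card_iff_congr (fun τ => ?_),
          show Nat.card {τ : Equiv.Perm (Fin (n+2)) // PIB (n+2) n n τ} = (n+1)*(n+2) from IH,
          if_pos hk]
        constructor
        · rintro (⟨-, hp⟩ | hp)
          · rw [hk] at hp; exact hp
          · rw [if_pos (by omega)] at hp
            exact absurd hp (pib_false (by omega) _)
        · intro hp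
          exact Or.inl ⟨by omega, by rw [hk]; exact hp⟩
      · have hcase : (k:ℕ) = n+1 ∨ (k:ℕ) = n+2 := by omega
        have key : Nat.card {τ : Equiv.Perm (Fin (n+2)) //
            ((k:ℕ) < n+1 ∧ PIB (n+2) n ((k:ℕ)) τ) ∨
              PIB (n+2) (n+1) (if (k:ℕ) < n+1 then n+1-1 else n+1) τ}
            = n+2 := by
          rw [card_iff_congr (fun τ => ?_),
            show Nat.card {τ : Equiv.Perm (Fin (n+2)) // PIB (n+2) (n+1) (n+1) τ} = n+2
              from cntA (n+1)]
          constructor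
          · rintro (⟨h, -⟩ | hp)
            · omega
            · rw [if_neg (by omega)] at hp; exact hp
          · intro hp
            refine Or.inr ?_
            rw [if_neg (by omega)]
            exact hp
        rcases hcase with h | h
        · rw [key, if_neg (by omega), if_pos h]
        · rw [key, if_neg (by omega), if_neg (by omega), if_pos h]
    rw [Finset.sum_congr rfl (fun k _ => step k),
      Fin.sum_univ_eq_sum_range (fun a => if a = n then (n+1)*(n+2) else if a = n+1 then n+2
        else if a = n+2 then n+2 else 0) (n+3),
      Finset.sum_range_succ, Finset.sum_range_succ, Finset.sum_range_succ,
      Finset.sum_eq_zero (fun i hi => by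
        rw [Finset.mem_range] at hi
        rw [if_neg (by omega), if_neg (by omega), if_neg (by omega)])]
    rw [if_pos rfl, if_neg (by omega), if_pos rfl, if_neg (by omega), if_neg (by omega),
      if_pos rfl]
    ring

lemma cntSt : ∀ n, cnt (n+1) n (n+1) = n*n + 1 := by
  intro n
  induction n with
  | zero => simpa using cnt_zero 1 1
  | succ n IH =>
    rw [cnt, card_split]
    have step : ∀ k : Fin (n+2),
        Nat.card {τ : Equiv.Perm (Fin (n+1)) // PIB (n+2) (n+1) (n+2) (ins k τ)}
          = if (k:ℕ) = n then n+1 else if (k:ℕ) = n+1 then n*n+1 else 1 := by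
      intro k
      have hk2 := k.2
      rw [card_iff_congr (fun τ => master k τ n (n+2))]
      rcases lt_trichotomy ((k:ℕ)) n with hk | hk | hk
      · rw [card_iff_congr (fun τ => ?_), card_perm_eq_one,
          if_neg (by omega), if_neg (by omega)]
        constructor
        · rintro (⟨-, hp⟩ | hp)
          · exact absurd hp (pib_false (by omega) _)
          · rw [if_pos (by omega)] at hp
            exact (pib_n_n τ).mp hp
        · intro hp
          refine Or.inr ?_
          rw [if_pos (by omega)]
          exact (pib_n_n τ).mpr hp
      · rw [card_iff_congr (fun τ => ?_),
          show Nat.card {τ : Equiv.Perm (Fin (n+1)) // PIB (n+1) n n τ} = n+1 from cntA n,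
          if_pos hk]
        constructor
        · rintro (⟨-, hp⟩ | hp)
          · rw [hk] at hp; exact hp
          · rw [if_pos (by omega)] at hp
            have h1 := (pib_n_n τ).mp hp
            rw [h1]
            exact pib_id le_rfl (by omega)
        · intro hp
          exact Or.inl ⟨by omega, by rw [hk]; exact hp⟩
      · have hk3 : (k:ℕ) = n+1 := by omega
        rw [card_iff_congr (fun τ => ?_),
          show Nat.card {τ : Equiv.Perm (Fin (n+1)) // PIB (n+1) n (n+1) τ} = n*n+1 from IH,
          if_neg (by omega), if_pos hk3]
        constructor
        · rintro (⟨-, hp⟩ | hp)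
          · rw [hk3] at hp; exact hp
          · rw [if_pos (by omega)] at hp
            have := (pib_n_n τ).mp hp
            rw [this]
            exact pib_id (by omega) (by omega)
        · intro hp
          exact Or.inl ⟨by omega, by rw [hk3]; exact hp⟩
    rw [Finset.sum_congr rfl (fun k _ => step k),
      Fin.sum_univ_eq_sum_range (fun a => if a = n then n+1 else if a = n+1 then n*n+1 else 1)
        (n+2),
      Finset.sum_range_succ, Finset.sum_range_succ,
      Finset.sum_congr rfl (fun i hi =>
        show (if i = n then n+1 else if i = n+1 then n*n+1 else 1) = 1 by
          rw [Finset.mem_range] at hi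
          rw [if_neg (by omega), if_neg (by omega)]),
      Finset.sum_const, Finset.card_range]
    rw [if_pos rfl, if_neg (by omega), if_pos rfl]
    simp only [smul_eq_mul, mul_one]
    ring

lemma cntZ (t : ℕ) :
    Nat.card {τ : Equiv.Perm (Fin (t+3)) //
      PIB (t+3) (t+1) (t+1) τ ∧ PIB (t+3) (t+2) (t+3) τ} = 2*t+5 := by
  rw [card_split (fun σ => PIB (t+3) (t+1) (t+1) σ ∧ PIB (t+3) (t+2) (t+3) σ)]
  have step : ∀ k : Fin (t+3),
      Nat.card {τ : Equiv.Perm (Fin (t+2)) //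
        PIB (t+3) (t+1) (t+1) (ins k τ) ∧ PIB (t+3) (t+2) (t+3) (ins k τ)}
        = if (k:ℕ) = t then 1 else if (k:ℕ) = t+1 then t+2
          else if (k:ℕ) = t+2 then t+2 else 0 := by
    intro k
    have hk2 := k.2
    rw [card_iff_congr (fun τ => and_congr (master k τ t (t+1)) (master k τ (t+1) (t+3)))]
    rcases lt_trichotomy ((k:ℕ)) t with hk | hk | hk
    · rw [card_false (fun τ => ?_), if_neg (by omega), if_neg (by omega), if_neg (by omega)]
      rintro ⟨(⟨-, hp⟩ | hp), -⟩
      · exact pib_false (by omega) τ hp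
      · rw [if_pos (by omega)] at hp
        exact pib_false (by omega) τ hp
    · rw [card_iff_congr (fun τ => ?_), card_perm_eq_one, if_pos hk]
      constructor
      · rintro ⟨-, (⟨-, hp⟩ | hp)⟩
        · rw [hk] at hp
          exact absurd hp (pib_false (by omega) _)
        · rw [if_pos (by omega)] at hp
          exact (pib_n_n τ).mp hp
      · intro hp
        constructor
        · exact Or.inl ⟨by omega, by rw [hk, hp]; exact pib_id le_rfl (by omega)⟩
        · refine Or.inr ?_
          rw [if_pos (by omega)]
          rw [hp]
          exact pib_id (by omega) (by omega)
    · have hcase : (k:ℕ) = t+1 ∨ (k:ℕ) = t+2 := by omega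
      have key : ∀ τ : Equiv.Perm (Fin (t+2)),
          ((((k:ℕ) < t+1 ∧ PIB (t+2) t ((k:ℕ)) τ) ∨
            PIB (t+2) (t+1) (if (k:ℕ) < t+1 then t+1-1 else t+1) τ) ∧
          (((k:ℕ) < t+3 ∧ PIB (t+2) (t+1) ((k:ℕ)) τ) ∨
            PIB (t+2) (t+2) (if (k:ℕ) < t+3 then t+3-1 else t+3) τ))
          ↔ PIB (t+2) (t+1) (t+1) τ := by
        intro τ
        constructor
        · rintro ⟨(⟨h, -⟩ | hp), -⟩
          · omega
          · rw [if_neg (by omega)] at hp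
            exact hp
        · intro hp
          constructor
          · refine Or.inr ?_
            rw [if_neg (by omega)]
            exact hp
          · refine Or.inl ⟨by omega, ?_⟩
            rcases hcase with h | h
            · rw [h]; exact hp
            · rw [h]; exact pib_mono_c (by omega) τ hp
      rw [card_iff_congr key,
        show Nat.card {τ : Equiv.Perm (Fin (t+2)) // PIB (t+2) (t+1) (t+1) τ} = t+2
          from cntA (t+1)]
      rcases hcase with h | h
      · rw [if_neg (by omega), if_pos h]
      · rw [if_neg (by omega), if_neg (by omega), if_pos h]
  rw [Finset.sum_congr rfl (fun k _ => step k),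
    Fin.sum_univ_eq_sum_range (fun a => if a = t then 1 else if a = t+1 then t+2
      else if a = t+2 then t+2 else 0) (t+3),
    Finset.sum_range_succ, Finset.sum_range_succ, Finset.sum_range_succ,
    Finset.sum_eq_zero (fun i hi => by
      rw [Finset.mem_range] at hi
      rw [if_neg (by omega), if_neg (by omega), if_neg (by omega)])]
  rw [if_pos rfl, if_neg (by omega), if_pos rfl, if_neg (by omega), if_neg (by omega),
    if_pos rfl]
  omega

lemma cntV : ∀ t, cnt (t+2) t (t+1) = (t+2)*(t*t+1) := by
  intro t
  induction t with
  | zero => simpa using cnt_zero 2 1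
  | succ t IH =>
    rw [cnt, card_split]
    have step : ∀ k : Fin (t+3),
        Nat.card {τ : Equiv.Perm (Fin (t+2)) // PIB (t+3) (t+1) (t+2) (ins k τ)}
          = if (k:ℕ) = t then (t+1)*(t+2) else if (k:ℕ) = t+1 then (t+2)*(t*t+1)
            else if (k:ℕ) = t+2 then (t+1)*(t+1)+1 else t+2 := by
      intro k
      have hk2 := k.2
      have he : t+2-1 = t+1 := by omega
      rw [card_iff_congr (fun τ => master k τ t (t+2))]
      rcases lt_trichotomy ((k:ℕ)) t with hk | hk | hk
      · rw [card_iff_congr (fun τ => ?_),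
          show Nat.card {τ : Equiv.Perm (Fin (t+2)) // PIB (t+2) (t+1) (t+1) τ} = t+2
            from cntA (t+1),
          if_neg (by omega), if_neg (by omega), if_neg (by omega)]
        constructor
        · rintro (⟨-, hp⟩ | hp)
          · exact absurd hp (pib_false (by omega) _)
          · rw [if_pos (by omega), he] at hp
            exact hp
        · intro hp
          refine Or.inr ?_
          rw [if_pos (by omega), he]
          exact hp
      · rw [card_iff_congr (fun τ => ?_),
          show Nat.card {τ : Equiv.Perm (Fin (t+2)) // PIB (t+2) t t τ} = (t+1)*(t+2)
            from cntW t,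
          if_pos hk]
        constructor
        · rintro (⟨-, hp⟩ | hp)
          · rw [hk] at hp; exact hp
          · rw [if_pos (by omega), he] at hp
            exact pib_dropLast hp
        · intro hp
          exact Or.inl ⟨by omega, by rw [hk]; exact hp⟩
      · rcases (by omega : (k:ℕ) = t+1 ∨ (k:ℕ) = t+2) with h | h
        · rw [card_iff_congr (fun τ => ?_),
            show Nat.card {τ : Equiv.Perm (Fin (t+2)) // PIB (t+2) t (t+1) τ}
              = (t+2)*(t*t+1) from IH,
            if_neg (by omega), if_pos h]
          constructor
          · rintro (⟨-, hp⟩ | hp)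
            · rw [h] at hp; exact hp
            · rw [if_pos (by omega), he] at hp
              exact pib_mono_c (by omega) τ (pib_dropLast hp)
          · intro hp
            exact Or.inl ⟨by omega, by rw [h]; exact hp⟩
        · rw [card_iff_congr (fun τ => ?_),
            show Nat.card {τ : Equiv.Perm (Fin (t+2)) // PIB (t+2) (t+1) (t+2) τ}
              = (t+1)*(t+1)+1 from cntSt (t+1),
            if_neg (by omega), if_neg (by omega), if_pos h]
          constructor
          · rintro (⟨hh, -⟩ | hp)
            · omega
            · rw [if_neg (by omega)] at hp
              exact hp
          · intro hp
            refine Or.inr ?_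
            rw [if_neg (by omega)]
            exact hp
    rw [Finset.sum_congr rfl (fun k _ => step k),
      Fin.sum_univ_eq_sum_range (fun a => if a = t then (t+1)*(t+2)
        else if a = t+1 then (t+2)*(t*t+1) else if a = t+2 then (t+1)*(t+1)+1 else t+2) (t+3),
      Finset.sum_range_succ, Finset.sum_range_succ, Finset.sum_range_succ,
      Finset.sum_congr rfl (fun i hi =>
        show (if i = t then (t+1)*(t+2) else if i = t+1 then (t+2)*(t*t+1)
          else if i = t+2 then (t+1)*(t+1)+1 else t+2) = t+2 by
          rw [Finset.mem_range] at hi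
          rw [if_neg (by omega), if_neg (by omega), if_neg (by omega)]),
      Finset.sum_const, Finset.card_range]
    rw [if_pos rfl, if_neg (by omega), if_pos rfl, if_neg (by omega), if_neg (by omega),
      if_pos rfl]
    simp only [smul_eq_mul]
    ring

lemma pib_one_pos (n c : ℕ) (hn : 1 ≤ n) (hc : 1 ≤ c) (τ : Equiv.Perm (Fin n)) :
    PIB n 1 c τ := by
  refine ⟨fun _ => ⟨0, by omega⟩, ?_, ?_, ?_⟩
  · intro a b h
    have := a.2; have := b.2
    simp only [Fin.lt_def] at h
    omega
  · intro a b h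
    have := a.2; have := b.2
    simp only [Fin.lt_def] at h
    omega
  · intro i
    simpa using Nat.succ_le_iff.mp hc

lemma cntT_step (e : ℕ) :
    cnt (e+4) (e+2) (e+4)
      = (e+1) * ((e+2)*(e+2)+1)
        + (Nat.card {τ : Equiv.Perm (Fin (e+3)) //
            PIB (e+3) (e+1) (e+1) τ ∨ PIB (e+3) (e+2) (e+3) τ})
        + (e+3)*((e+1)*(e+1)+1) + cnt (e+3) (e+1) (e+3) := by
  rw [cnt, card_split]
  have step : ∀ k : Fin (e+4),
      Nat.card {τ : Equiv.Perm (Fin (e+3)) // PIB (e+4) (e+2) (e+4) (ins k τ)}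
        = if (k:ℕ) = e+1 then
            (Nat.card {τ : Equiv.Perm (Fin (e+3)) //
              PIB (e+3) (e+1) (e+1) τ ∨ PIB (e+3) (e+2) (e+3) τ})
          else if (k:ℕ) = e+2 then (e+3)*((e+1)*(e+1)+1)
          else if (k:ℕ) = e+3 then cnt (e+3) (e+1) (e+3)
          else (e+2)*(e+2)+1 := by
    intro k
    have hk2 := k.2
    have he : e+4-1 = e+3 := by omega
    rw [card_iff_congr (fun τ => master k τ (e+1) (e+4))]
    have simp2 : ∀ τ : Equiv.Perm (Fin (e+3)),
        (((k:ℕ) < e+4 ∧ PIB (e+3) (e+1) ((k:ℕ)) τ) ∨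
          PIB (e+3) (e+2) (if (k:ℕ) < e+4 then e+4-1 else e+4) τ)
        ↔ (PIB (e+3) (e+1) ((k:ℕ)) τ ∨ PIB (e+3) (e+2) (e+3) τ) := by
      intro τ
      rw [if_pos (by omega), he]
      constructor
      · rintro (⟨-, hp⟩ | hp)
        · exact Or.inl hp
        · exact Or.inr hp
      · rintro (hp | hp)
        · exact Or.inl ⟨by omega, hp⟩
        · exact Or.inr hp
    rcases lt_trichotomy ((k:ℕ)) (e+1) with hk | hk | hk
    · rw [card_iff_congr (fun τ => (simp2 τ).trans ?_),
        show Nat.card {τ : Equiv.Perm (Fin (e+3)) // PIB (e+3) (e+2) (e+3) τ}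
          = (e+2)*(e+2)+1 from cntSt (e+2),
        if_neg (by omega), if_neg (by omega), if_neg (by omega)]
      constructor
      · rintro (hp | hp)
        · exact absurd hp (pib_false (by omega) _)
        · exact hp
      · intro hp
        exact Or.inr hp
    · rw [card_iff_congr (fun τ => (simp2 τ).trans (by rw [hk])), if_pos hk]
    · rcases (by omega : (k:ℕ) = e+2 ∨ (k:ℕ) = e+3) with h | h
      · rw [card_iff_congr (fun τ => (simp2 τ).trans ?_),
          show Nat.card {τ : Equiv.Perm (Fin (e+3)) // PIB (e+3) (e+1) (e+2) τ}
            = (e+3)*((e+1)*(e+1)+1) from cntV (e+1),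
          if_neg (by omega), if_pos h]
        constructor
        · rintro (hp | hp)
          · rw [h] at hp; exact hp
          · exact pib_dropLast hp
        · intro hp
          exact Or.inl (by rw [h]; exact hp)
      · rw [card_iff_congr (fun τ => (simp2 τ).trans ?_),
          show Nat.card {τ : Equiv.Perm (Fin (e+3)) // PIB (e+3) (e+1) (e+3) τ}
            = cnt (e+3) (e+1) (e+3) from rfl,
          if_neg (by omega), if_neg (by omega), if_pos h]
        constructor
        · rintro (hp | hp)
          · rw [h] at hp; exact hp
          · exact pib_drop hp
        · intro hp
          exact Or.inl (by rw [h]; exact hp)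
  rw [Finset.sum_congr rfl (fun k _ => step k),
    Fin.sum_univ_eq_sum_range (fun a => if a = e+1 then
        (Nat.card {τ : Equiv.Perm (Fin (e+3)) //
          PIB (e+3) (e+1) (e+1) τ ∨ PIB (e+3) (e+2) (e+3) τ})
      else if a = e+2 then (e+3)*((e+1)*(e+1)+1)
      else if a = e+3 then cnt (e+3) (e+1) (e+3)
      else (e+2)*(e+2)+1) (e+4),
    Finset.sum_range_succ, Finset.sum_range_succ, Finset.sum_range_succ,
    Finset.sum_congr rfl (fun i hi =>
      show (if i = e+1 then
          (Nat.card {τ : Equiv.Perm (Fin (e+3)) //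
            PIB (e+3) (e+1) (e+1) τ ∨ PIB (e+3) (e+2) (e+3) τ})
        else if i = e+2 then (e+3)*((e+1)*(e+1)+1)
        else if i = e+3 then cnt (e+3) (e+1) (e+3)
        else (e+2)*(e+2)+1) = (e+2)*(e+2)+1 by
        rw [Finset.mem_range] at hi
        rw [if_neg (by omega), if_neg (by omega), if_neg (by omega)]),
    Finset.sum_const, Finset.card_range]
  rw [if_pos rfl, if_neg (by omega), if_pos rfl, if_neg (by omega), if_neg (by omega),
    if_pos rfl]
  ring

lemma mainT : ∀ d, 1 ≤ d → 2 * cnt (d+2) d (d+2) = d^4 + 2*d^3 + d^2 + 2*d + 6 := by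
  intro d
  induction d with
  | zero => intro h; exact absurd h (by omega)
  | succ n IH =>
    intro _
    rcases Nat.eq_zero_or_pos n with hn | hn
    · subst hn
      have h6 : cnt 3 1 3 = 6 := by
        rw [cnt, card_perm_true (fun τ => pib_one_pos 3 3 (by omega) (by omega) τ)]
        rfl
      show 2 * cnt 3 1 3 = 1^4 + 2*1^3 + 1^2 + 2*1 + 6
      rw [h6]
      norm_num
    · obtain ⟨e, rfl⟩ : ∃ e, n = e + 1 := ⟨n - 1, by omega⟩
      have IH2 : 2 * cnt (e+3) (e+1) (e+3)
          = (e+1)^4 + 2*(e+1)^3 + (e+1)^2 + 2*(e+1) + 6 := IH (by omega)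
      have hA : Nat.card {τ : Equiv.Perm (Fin (e+3)) // PIB (e+3) (e+1) (e+1) τ}
          = (e+2)*(e+3) := cntW (e+1)
      have hB : Nat.card {τ : Equiv.Perm (Fin (e+3)) // PIB (e+3) (e+2) (e+3) τ}
          = (e+2)*(e+2)+1 := cntSt (e+2)
      have hUZ := card_or_and (fun τ : Equiv.Perm (Fin (e+3)) => PIB (e+3) (e+1) (e+1) τ)
        (fun τ => PIB (e+3) (e+2) (e+3) τ)
      rw [hA, hB, cntZ e] at hUZ
      have h2 : (e+2)*(e+3) + ((e+2)*(e+2)+1) = (2*e*e+7*e+6) + (2*e+5) := by ring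
      have hU : Nat.card {τ : Equiv.Perm (Fin (e+3)) //
          PIB (e+3) (e+1) (e+1) τ ∨ PIB (e+3) (e+2) (e+3) τ} = 2*e*e+7*e+6 :=
        Nat.add_right_cancel (hUZ.trans h2)
      show 2 * cnt (e+4) (e+2) (e+4)
          = (e+2)^4 + 2*(e+2)^3 + (e+2)^2 + 2*(e+2) + 6
      rw [cntT_step e, hU, Nat.mul_add, IH2]
      ring

end BdProof

/-- For every `d ≥ 1`, `B_d(d+2) = d⁴/2 + d³ + d²/2 + d + 3`,
i.e. `2·B_d(d+2) = d⁴ + 2d³ + d² + 2d + 6`. -/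
theorem stmt2 (d : ℕ) (hd : 1 ≤ d) :
    2 * B d (d + 2) = d ^ 4 + 2 * d ^ 3 + d ^ 2 + 2 * d + 6 := by
  have h := BdProof.mainT d hd
  have hiff : ∀ σ : Equiv.Perm (Fin (d+2)),
      ContainsInc (d+2) d σ ↔ BdProof.PIB (d+2) d (d+2) σ := by
    intro σ
    constructor
    · rintro ⟨s, h1, h2⟩
      exact ⟨s, h1, h2, fun i => (s i).2⟩
    · rintro ⟨s, h1, h2, -⟩
      exact ⟨s, h1, h2⟩
  rw [B, BdProof.card_iff_congr hiff]
  exact h
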